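/- arXiv:1708.09077 — 2 statements merged into one kernel-verified Lean document; each statement's English description precedes it below -/
import Mathlib

section
/- The number of circular parking sequences for car sizes (y_1, ..., y_n) on M = y_1 + ··· + y_n + 1 circular spots equals M · ∏_{i=1}^{n-1} (y_1 + ··· + y_i + n + 1 - i). -/
/-- One step of the linear parking process on spots `1, …, M`:
car of size `y` with preference `c` drives to the first empty spot `j ≥ c`,
and parks in spots `j, …, j+y-1` if they are all empty and within the lot. -/
def parkStep (M : ℕ) (occ : Finset ℕ) (c y : ℕ) : Option (Finset ℕ) :=
  match (List.range' c (M + 1 - c)).find? (fun j => decide (j ∉ occ)) with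
  | none => none
  | some j =>
      if j + y - 1 ≤ M ∧ ∀ k ∈ Finset.Ico j (j + y), k ∉ occ then
        some (occ ∪ Finset.Ico j (j + y))
      else none

/-- Run the linear parking process for a list of (preference, size) pairs. -/
def parkRun (M : ℕ) (l : List (ℕ × ℕ)) : Option (Finset ℕ) :=
  l.foldlM (fun occ p => parkStep M occ p.1 p.2) ∅

/-- `c` is a parking sequence for car sizes `y` on `y.sum` linear spots. -/
def IsParkingSeq (y c : List ℕ) : Prop :=
  c.length = y.length ∧ (∀ x ∈ c, 1 ≤ x) ∧ (parkRun y.sum (c.zip y)).isSome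

/-- One step of the circular parking process on `M` spots (labeled by `ZMod M`):
car of size `y` with preference `c` moves cyclically forward to the first
empty spot `j` and parks in spots `j, j+1, …, j+y-1` if they are all empty. -/
def cparkStep (M : ℕ) (occ : Finset (ZMod M)) (c : ZMod M) (y : ℕ) :
    Option (Finset (ZMod M)) :=
  match (List.range M).find? (fun k => decide (c + (k : ZMod M) ∉ occ)) with
  | none => none
  | some k =>
      let spots : Finset (ZMod M) :=
        (Finset.range y).image (fun t : ℕ => c + (k : ZMod M) + (t : ZMod M))
      if ∀ s ∈ spots, s ∉ occ then some (occ ∪ spots) else none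

/-- Run the circular parking process for a list of (preference, size) pairs. -/
def cparkRun (M : ℕ) (l : List (ZMod M × ℕ)) : Option (Finset (ZMod M)) :=
  l.foldlM (fun occ p => cparkStep M occ p.1 p.2) ∅

/-- `c` is a circular parking sequence for car sizes `y` on `y.sum + 1` circular spots. -/
def IsCircParkingSeq (y : List ℕ) (c : List (ZMod (y.sum + 1))) : Prop :=
  c.length = y.length ∧ (cparkRun (y.sum + 1) (c.zip y)).isSome

namespace CPark

/-- generic find? over range characterization -/
lemma find?_range_eq_some {n : ℕ} {P : ℕ → Bool} :
    ∀ k, (List.range n).find? P = some k ↔ k < n ∧ P k = true ∧ ∀ j < k, P j = false := by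
  induction n with
  | zero => simp
  | succ n ih =>
    intro k
    rw [List.range_succ, List.find?_append]
    cases h : (List.range n).find? P with
    | some k' =>
      obtain ⟨hk'n, hPk', hmin'⟩ := (ih k').mp h
      simp only [Option.some_or, Option.some.injEq]
      constructor
      · rintro rfl
        exact ⟨Nat.lt_succ_of_lt hk'n, hPk', hmin'⟩
      · rintro ⟨hkn, hPk, hmin⟩
        rcases lt_trichotomy k' k with hlt | heq | hgt
        · exact absurd hPk' (by simpa using hmin k' hlt)
        · exact heq
        · exact absurd hPk (by simpa using hmin' k hgt)
    | none =>
      rw [List.find?_eq_none] at h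
      simp only [Option.none_or]
      by_cases hn : P n = true
      · rw [show [n] = n :: [] from rfl, List.find?_cons_of_pos hn]
        simp only [Option.some.injEq]
        constructor
        · rintro rfl
          refine ⟨Nat.lt_succ_self n, hn, fun j hj => ?_⟩
          rcases Bool.eq_false_or_eq_true (P j) with h' | h'
          · exact absurd h' (h j (List.mem_range.mpr hj))
          · exact h'
        · rintro ⟨hkn, hPk, _⟩
          have : ¬ k < n := fun hlt => h k (List.mem_range.mpr hlt) hPk
          omega
      · rw [show [n] = n :: [] from rfl, List.find?_cons_of_neg hn, List.find?_nil]
        simp only [false_iff, reduceCtorEq]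
        rintro ⟨hkn, hPk, _⟩
        rcases Nat.lt_succ_iff_lt_or_eq.mp hkn with hlt | rfl
        · exact h k (List.mem_range.mpr hlt) hPk
        · exact hn hPk

variable {m : ℕ}

/-- `k` is the offset of the first empty spot cyclically forward from `c`. -/
def IsFE (m : ℕ) (occ : Finset (ZMod m)) (c : ZMod m) (k : ℕ) : Prop :=
  k < m ∧ c + (k : ZMod m) ∉ occ ∧ ∀ j < k, c + (j : ZMod m) ∈ occ

lemma IsFE.unique {occ : Finset (ZMod m)} {c : ZMod m} {k₁ k₂ : ℕ}
    (h₁ : IsFE m occ c k₁) (h₂ : IsFE m occ c k₂) : k₁ = k₂ := by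
  rcases lt_trichotomy k₁ k₂ with h | h | h
  · exact absurd (h₂.2.2 k₁ h) h₁.2.1
  · exact h
  · exact absurd (h₁.2.2 k₂ h) h₂.2.1

lemma cparkStep_eq_some_iff {occ o : Finset (ZMod m)} {c : ZMod m} {y : ℕ} :
    cparkStep m occ c y = some o ↔ ∃ k : ℕ, IsFE m occ c k ∧
      (∀ t < y, c + (k : ZMod m) + (t : ZMod m) ∉ occ) ∧
      o = occ ∪ (Finset.range y).image (fun t : ℕ => c + (k : ZMod m) + (t : ZMod m)) := by
  unfold cparkStep
  have hlist : (do let a ← List.range m; pure ((a : ZMod m))) =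
      (List.range m).map (fun a : ℕ => (a : ZMod m)) := by
    exact List.map_eq_flatMap.symm
  rw [hlist, List.find?_map]
  cases hf : (List.range m).find?
      ((fun k : ZMod m => decide (c + k ∉ occ)) ∘ (fun a : ℕ => (a : ZMod m))) with
  | none =>
    rw [List.find?_eq_none] at hf
    simp only [Option.map_none, false_iff, reduceCtorEq]
    rintro ⟨k, ⟨hkm, hnot, _⟩, _, _⟩
    have := hf k (List.mem_range.mpr hkm)
    simp only [Function.comp] at this
    exact this (by simpa using hnot)
  | some k =>
    rw [find?_range_eq_some] at hf
    obtain ⟨hkm, hPk, hmin⟩ := hf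
    have hfe : IsFE m occ c k :=
      ⟨hkm, by simpa using hPk, fun j hj => by simpa using hmin j hj⟩
    simp only [Option.map_some]
    by_cases hcond : ∀ s ∈ (Finset.range y).image (fun t : ℕ => c + (k : ZMod m) + (t : ZMod m)),
        s ∉ occ
    · rw [if_pos hcond]
      simp only [Option.some.injEq]
      constructor
      · rintro rfl
        exact ⟨k, hfe, fun t ht => hcond _ (Finset.mem_image.mpr ⟨t, Finset.mem_range.mpr ht, rfl⟩),
          rfl⟩
      · rintro ⟨k', hfe', _, rfl⟩
        rw [hfe'.unique hfe]
    · rw [if_neg hcond]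
      simp only [false_iff, reduceCtorEq]
      rintro ⟨k', hfe', hfree, _⟩
      rw [hfe'.unique hfe] at hfree
      refine hcond ?_
      intro s hs
      obtain ⟨t, ht, rfl⟩ := Finset.mem_image.mp hs
      exact hfree t (Finset.mem_range.mp ht)

def runFrom (m : ℕ) (occ : Finset (ZMod m)) (l : List (ZMod m × ℕ)) : Option (Finset (ZMod m)) :=
  l.foldlM (fun occ p => cparkStep m occ p.1 p.2) occ

lemma cparkRun_eq_runFrom (l : List (ZMod m × ℕ)) : cparkRun m l = runFrom m ∅ l := rfl

@[simp] lemma runFrom_nil (occ : Finset (ZMod m)) : runFrom m occ [] = some occ := rfl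

lemma runFrom_cons (occ : Finset (ZMod m)) (c : ZMod m) (y : ℕ) (l : List (ZMod m × ℕ)) :
    runFrom m occ ((c, y) :: l) = (cparkStep m occ c y).bind (fun o => runFrom m o l) := by
  simp [runFrom, List.foldlM_cons]

lemma runFrom_append (occ : Finset (ZMod m)) (l₁ l₂ : List (ZMod m × ℕ)) :
    runFrom m occ (l₁ ++ l₂) = (runFrom m occ l₁).bind (fun o => runFrom m o l₂) := by
  simp [runFrom, List.foldlM_append]

lemma subset_of_step {occ o : Finset (ZMod m)} {c : ZMod m} {y : ℕ}
    (h : cparkStep m occ c y = some o) : occ ⊆ o := by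
  obtain ⟨k, _, _, rfl⟩ := cparkStep_eq_some_iff.mp h
  exact Finset.subset_union_left

lemma subset_of_runFrom {occ O : Finset (ZMod m)} {l : List (ZMod m × ℕ)}
    (h : runFrom m occ l = some O) : occ ⊆ O := by
  induction l generalizing occ with
  | nil => simp_all [runFrom_nil]
  | cons pr l ih =>
    obtain ⟨c, y⟩ := pr
    rw [runFrom_cons] at h
    cases hs : cparkStep m occ c y with
    | none => rw [hs] at h; simp at h
    | some o =>
      rw [hs] at h
      exact (subset_of_step hs).trans (ih h)

end CPark

namespace CPark
variable {m : ℕ}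

lemma card_of_step {occ o : Finset (ZMod m)} {c : ZMod m} {y : ℕ}
    (h : cparkStep m occ c y = some o) (hy : y ≤ m) : o.card = occ.card + y := by
  obtain ⟨k, _, hfree, rfl⟩ := cparkStep_eq_some_iff.mp h
  rw [Finset.card_union_of_disjoint, Finset.card_image_of_injOn, Finset.card_range]
  · intro t₁ h₁ t₂ h₂ he
    simp only [Finset.coe_range, Set.mem_Iio] at h₁ h₂
    have : ((t₁ : ZMod m)) = (t₂ : ZMod m) := by
      have := add_left_cancel he
      exact this
    have := congrArg ZMod.val this
    rwa [ZMod.val_cast_of_lt (lt_of_lt_of_le h₁ hy),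
      ZMod.val_cast_of_lt (lt_of_lt_of_le h₂ hy)] at this
  · rw [Finset.disjoint_right]
    intro s hs
    obtain ⟨t, ht, rfl⟩ := Finset.mem_image.mp hs
    exact hfree t (Finset.mem_range.mp ht)

lemma card_of_runFrom {occ O : Finset (ZMod m)} {l : List (ZMod m × ℕ)}
    (h : runFrom m occ l = some O) (hsz : ∀ pr ∈ l, pr.2 ≤ m) :
    O.card = occ.card + (l.map Prod.snd).sum := by
  induction l generalizing occ with
  | nil => simp only [runFrom_nil, Option.some.injEq] at h; subst h; simp
  | cons pr l ih =>
    obtain ⟨c, y⟩ := pr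
    rw [runFrom_cons] at h
    cases hs : cparkStep m occ c y with
    | none => rw [hs] at h; simp at h
    | some o =>
      rw [hs] at h
      simp only [Option.bind_some] at h
      have := ih h (fun pr hpr => hsz pr (List.mem_cons_of_mem _ hpr))
      rw [this, card_of_step hs (hsz (c, y) (List.mem_cons_self))]
      simp [add_assoc]

lemma isFE_le_card {occ : Finset (ZMod m)} {c : ZMod m} {k : ℕ}
    (h : IsFE m occ c k) : k ≤ occ.card := by
  obtain ⟨hkm, _, hmin⟩ := h
  have : (Finset.range k).card ≤ occ.card := by
    have := Finset.card_le_card_of_injOn (fun j : ℕ => c + (j : ZMod m))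
      (fun j hj => hmin j (Finset.mem_range.mp hj)) ?_
    · simpa using this
    · intro t₁ h₁ t₂ h₂ he
      simp only [Finset.coe_range, Set.mem_Iio] at h₁ h₂
      have : ((t₁ : ZMod m)) = (t₂ : ZMod m) := add_left_cancel he
      have := congrArg ZMod.val this
      rwa [ZMod.val_cast_of_lt (h₁.trans hkm), ZMod.val_cast_of_lt (h₂.trans hkm)] at this
  simpa using this

lemma exists_isFE [NeZero m] {occ : Finset (ZMod m)} (c : ZMod m)
    (h : ∃ s, s ∉ occ) : ∃ k, IsFE m occ c k := by
  obtain ⟨s, hs⟩ := h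
  have hex : ∃ j : ℕ, c + (j : ZMod m) ∉ occ := by
    refine ⟨(s - c).val, ?_⟩
    rwa [ZMod.natCast_rightInverse _, add_sub_cancel]
  classical
  refine ⟨Nat.find hex, ?_, Nat.find_spec hex, fun j hj => ?_⟩
  · have : Nat.find hex ≤ (s - c).val := Nat.find_le (by
      rwa [ZMod.natCast_rightInverse _, add_sub_cancel])
    exact lt_of_le_of_lt this (ZMod.val_lt _)
  · by_contra hmem
    exact (Nat.find_min hex hj) hmem

/-- membership shift -/
lemma mem_image_add_right {occ : Finset (ZMod m)} {x r : ZMod m} :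
    x + r ∈ occ.image (· + r) ↔ x ∈ occ := by
  constructor
  · intro h
    obtain ⟨a, ha, he⟩ := Finset.mem_image.mp h
    rwa [← add_left_injective r he]
  · intro h
    exact Finset.mem_image.mpr ⟨x, h, rfl⟩

lemma isFE_shift {occ : Finset (ZMod m)} {c : ZMod m} {k : ℕ} (r : ZMod m) :
    IsFE m (occ.image (· + r)) (c + r) k ↔ IsFE m occ c k := by
  unfold IsFE
  have hpos : ∀ j : ℕ, c + r + (j : ZMod m) = (c + (j : ZMod m)) + r := by
    intro j; ring
  constructor
  · rintro ⟨hkm, hnot, hmin⟩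
    refine ⟨hkm, fun hmem => hnot ?_, fun j hj => ?_⟩
    · rw [hpos]; exact mem_image_add_right.mpr hmem
    · have := hmin j hj
      rw [hpos] at this
      exact mem_image_add_right.mp this
  · rintro ⟨hkm, hnot, hmin⟩
    refine ⟨hkm, fun hmem => hnot ?_, fun j hj => ?_⟩
    · rw [hpos] at hmem; exact mem_image_add_right.mp hmem
    · rw [hpos]; exact mem_image_add_right.mpr (hmin j hj)

lemma step_shift {occ : Finset (ZMod m)} {c : ZMod m} {y : ℕ} (r : ZMod m) :
    cparkStep m (occ.image (· + r)) (c + r) y =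
      Option.map (Finset.image (· + r)) (cparkStep m occ c y) := by
  cases hs : cparkStep m occ c y with
  | none =>
    simp only [Option.map_none]
    by_contra hne
    obtain ⟨o', ho'⟩ := Option.ne_none_iff_exists'.mp hne
    obtain ⟨k, hfe, hfree, rfl⟩ := cparkStep_eq_some_iff.mp ho'
    have hfe' := (isFE_shift r).mp hfe
    have : cparkStep m occ c y = some (occ ∪ (Finset.range y).image
        (fun t : ℕ => c + (k : ZMod m) + (t : ZMod m))) := by
      rw [cparkStep_eq_some_iff]
      refine ⟨k, hfe', fun t ht => fun hmem => hfree t ht ?_, rfl⟩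
      have : c + r + (k : ZMod m) + (t : ZMod m) = (c + (k : ZMod m) + (t : ZMod m)) + r := by ring
      rw [this]
      exact mem_image_add_right.mpr hmem
    rw [this] at hs; exact Option.some_ne_none _ hs
  | some o =>
    obtain ⟨k, hfe, hfree, rfl⟩ := cparkStep_eq_some_iff.mp hs
    simp only [Option.map_some]
    rw [cparkStep_eq_some_iff]
    refine ⟨k, (isFE_shift r).mpr hfe, fun t ht hmem => hfree t ht ?_, ?_⟩
    · have : c + r + (k : ZMod m) + (t : ZMod m) = (c + (k : ZMod m) + (t : ZMod m)) + r := by ring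
      rw [this] at hmem
      exact mem_image_add_right.mp hmem
    · rw [Finset.image_union, Finset.image_image]
      congr 1
      refine Finset.image_congr ?_
      intro t _
      simp only [Function.comp]
      ring

lemma runFrom_shift {occ : Finset (ZMod m)} {l : List (ZMod m × ℕ)} (r : ZMod m) :
    runFrom m (occ.image (· + r)) (l.map (fun pr => (pr.1 + r, pr.2))) =
      Option.map (Finset.image (· + r)) (runFrom m occ l) := by
  induction l generalizing occ with
  | nil => simp
  | cons pr l ih =>
    obtain ⟨c, y⟩ := pr
    simp only [List.map_cons]
    rw [runFrom_cons, runFrom_cons, step_shift r]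
    cases cparkStep m occ c y with
    | none => simp
    | some o => simpa using ih (occ := o)

end CPark
namespace CPark

instance instNZadd {m' w : ℕ} [NeZero m'] : NeZero (m' + (w - 1)) :=
  ⟨by have := NeZero.pos m'; omega⟩

section Contract

set_option linter.unusedSectionVars false

variable {m' w : ℕ} [NeZero m']

/-- The embedding of the small circle into the big circle, contracting the
arc `[p, p + w - 1)` (which is skipped) to nothing; `g p 0 = p + (w-1)`. -/
def g (p : ZMod (m' + (w - 1))) (j : ZMod m') : ZMod (m' + (w - 1)) :=
  p + ((w - 1 : ℕ) : ZMod (m' + (w - 1))) + ((j.val : ℕ) : ZMod (m' + (w - 1)))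

variable {p : ZMod (m' + (w - 1))}

lemma m'_le : m' ≤ m' + (w - 1) := Nat.le_add_right _ _

lemma g_inj : Function.Injective (g p) := by
  intro j₁ j₂ h
  unfold g at h
  have h2 := add_left_cancel h
  have := congrArg ZMod.val h2
  rw [ZMod.val_cast_of_lt (lt_of_lt_of_le (ZMod.val_lt j₁) m'_le),
    ZMod.val_cast_of_lt (lt_of_lt_of_le (ZMod.val_lt j₂) m'_le)] at this
  exact ZMod.val_injective _ this

lemma mem_image_g {occ' : Finset (ZMod m')} {j : ZMod m'} :
    g p j ∈ occ'.image (g p) ↔ j ∈ occ' := by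
  constructor
  · intro h
    obtain ⟨a, ha, he⟩ := Finset.mem_image.mp h
    rwa [← g_inj he]
  · intro h
    exact Finset.mem_image.mpr ⟨j, h, rfl⟩

lemma g_add_of_lt {c' : ZMod m'} {j : ℕ} (h : c'.val + j < m') :
    g p c' + (j : ZMod (m' + (w - 1))) = g p (c' + (j : ZMod m')) := by
  unfold g
  have h1 : ((j : ZMod m')).val = j := ZMod.val_cast_of_lt (by omega)
  have h2 : (c' + (j : ZMod m')).val = c'.val + j := by
    rw [ZMod.val_add_of_lt (by rw [h1]; exact h), h1]
  rw [h2, Nat.cast_add]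
  ring

lemma g_wrap {c' : ZMod m'} :
    g p c' + (((m' - c'.val : ℕ)) : ZMod (m' + (w - 1))) = p := by
  unfold g
  have hv : c'.val ≤ m' := le_of_lt (ZMod.val_lt c')
  have : ((w - 1 : ℕ) : ZMod (m' + (w - 1))) + (c'.val : ZMod (m' + (w - 1)))
      + ((m' - c'.val : ℕ) : ZMod (m' + (w - 1))) = 0 := by
    rw [← Nat.cast_add, ← Nat.cast_add, show (w - 1) + c'.val + (m' - c'.val) = m' + (w - 1) by omega,
      ZMod.natCast_self]
  calc p + ((w - 1 : ℕ) : ZMod (m' + (w - 1))) + (c'.val : ZMod (m' + (w - 1)))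
        + ((m' - c'.val : ℕ) : ZMod (m' + (w - 1)))
      = p + (((w - 1 : ℕ) : ZMod (m' + (w - 1))) + (c'.val : ZMod (m' + (w - 1)))
        + ((m' - c'.val : ℕ) : ZMod (m' + (w - 1)))) := by ring
    _ = p := by rw [this, add_zero]

lemma g_zero : g p 0 = p + ((w - 1 : ℕ) : ZMod (m' + (w - 1))) := by
  unfold g
  simp [ZMod.val_zero]

lemma R_not_mem {occ' : Finset (ZMod m')} (h0 : (0 : ZMod m') ∉ occ') {t : ℕ} (ht : t < w) :
    p + (t : ZMod (m' + (w - 1))) ∉ occ'.image (g p) := by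
  intro hmem
  obtain ⟨j, hj, he⟩ := Finset.mem_image.mp hmem
  unfold g at he
  have he2 : (((w - 1) + j.val : ℕ) : ZMod (m' + (w - 1))) = (t : ZMod (m' + (w - 1))) := by
    have : p + (((w - 1) + j.val : ℕ) : ZMod (m' + (w - 1))) = p + (t : ZMod (m' + (w - 1))) := by
      rw [Nat.cast_add, ← add_assoc]; exact he
    exact add_left_cancel this
  have hj' := ZMod.val_lt j
  have h1 : (w - 1) + j.val < m' + (w - 1) := by omega
  have h2 : t < m' + (w - 1) := by have := NeZero.pos m'; omega
  have := congrArg ZMod.val he2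
  rw [ZMod.val_cast_of_lt h1, ZMod.val_cast_of_lt h2] at this
  -- (w-1) + j.val = t < w, so t = w-1 and j.val = 0
  have hjval : j.val = 0 := by omega
  have : j = 0 := ZMod.val_injective _ (by rw [hjval, ZMod.val_zero])
  subst this
  exact h0 hj

/-- left inverse of `g p` -/
def ginv (p : ZMod (m' + (w - 1))) (x : ZMod (m' + (w - 1))) : ZMod m' :=
  (((x - (p + ((w - 1 : ℕ) : ZMod (m' + (w - 1))))).val : ℕ) : ZMod m')

lemma ginv_g {j : ZMod m'} : ginv p (g p j) = j := by
  unfold ginv g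
  have h1 : p + ((w - 1 : ℕ) : ZMod (m' + (w - 1))) + ((j.val : ℕ) : ZMod (m' + (w - 1)))
      - (p + ((w - 1 : ℕ) : ZMod (m' + (w - 1)))) = ((j.val : ℕ) : ZMod (m' + (w - 1))) := by ring
  rw [h1, ZMod.val_cast_of_lt (lt_of_lt_of_le (ZMod.val_lt j) m'_le),
    ZMod.natCast_rightInverse j]

lemma g_ginv {x : ZMod (m' + (w - 1))}
    (hx : ∀ t : ℕ, t < w - 1 → x ≠ p + (t : ZMod (m' + (w - 1)))) :
    g p (ginv p x) = x := by
  set q : ZMod (m' + (w - 1)) := p + ((w - 1 : ℕ) : ZMod (m' + (w - 1))) with hq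
  have hxq : x = q + ((x - q).val : ZMod (m' + (w - 1))) := by
    rw [ZMod.natCast_rightInverse (x - q)]; ring
  set s : ℕ := (x - q).val with hs
  have hsM : s < m' + (w - 1) := ZMod.val_lt _
  by_cases hlt : s < m'
  · unfold g ginv
    rw [← hq, ← hs, ZMod.val_cast_of_lt hlt]
    exact hxq.symm
  · exfalso
    apply hx (s - m') (by omega)
    rw [hxq, hq]
    have hcast : ((w - 1 : ℕ) : ZMod (m' + (w - 1))) + (s : ZMod (m' + (w - 1)))
        = ((s - m' : ℕ) : ZMod (m' + (w - 1))) := by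
      have heq : (w - 1) + s = (m' + (w - 1)) + (s - m') := by omega
      calc ((w - 1 : ℕ) : ZMod (m' + (w - 1))) + (s : ZMod (m' + (w - 1)))
          = (((w - 1) + s : ℕ) : ZMod (m' + (w - 1))) := by rw [Nat.cast_add]
        _ = (((m' + (w - 1)) + (s - m') : ℕ) : ZMod (m' + (w - 1))) := by rw [heq]
        _ = ((s - m' : ℕ) : ZMod (m' + (w - 1))) := by
            rw [Nat.cast_add, ZMod.natCast_self, zero_add]
    rw [add_assoc, hcast]

end Contract
end CPark
namespace CPark
section Contract2
set_option linter.unusedSectionVars false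

variable {m' w : ℕ} [NeZero m'] {p : ZMod (m' + (w - 1))}

lemma val_add_eq_zero_aux {c' : ZMod m'} {s : ℕ} (hs : c'.val + s = m') :
    c' + (s : ZMod m') = 0 := by
  nth_rewrite 1 [← ZMod.natCast_rightInverse c']
  rw [← Nat.cast_add, hs, ZMod.natCast_self]

lemma step_sim_fwd {occ' o' : Finset (ZMod m')} {c' : ZMod m'} {y : ℕ}
    (hy : 1 ≤ y) (h0 : (0 : ZMod m') ∉ occ')
    (hs : cparkStep m' occ' c' y = some o') (h0' : (0 : ZMod m') ∉ o') :
    cparkStep (m' + (w - 1)) (occ'.image (g p)) (g p c') y = some (o'.image (g p)) := by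
  obtain ⟨k, hfe, hfree, rfl⟩ := cparkStep_eq_some_iff.mp hs
  set v := c'.val with hvdef
  have hvm : v < m' := ZMod.val_lt c'
  -- k ≤ m' - v
  have hkv : k ≤ m' - v := by
    by_contra hgt
    push_neg at hgt
    have h0mem : c' + ((m' - v : ℕ) : ZMod m') ∈ occ' := hfe.2.2 _ hgt
    rw [val_add_eq_zero_aux (by omega)] at h0mem
    exact h0 h0mem
  -- the spots avoid 0
  have h0nospot : ∀ t : ℕ, t < y → c' + ((k : ZMod m')) + ((t : ZMod m')) ≠ 0 := by
    intro t ht he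
    apply h0'
    rw [← he]
    exact Finset.mem_union_right _ (Finset.mem_image.mpr ⟨t, Finset.mem_range.mpr ht, rfl⟩)
  have hvky : v + k + y ≤ m' := by
    by_contra hgt
    push_neg at hgt
    apply h0nospot (m' - v - k) (by omega)
    rw [show c' + ((k : ZMod m')) + ((m' - v - k : ℕ) : ZMod m')
        = c' + (((k + (m' - v - k) : ℕ)) : ZMod m') by push_cast; ring]
    exact val_add_eq_zero_aux (by omega)
  rw [cparkStep_eq_some_iff]
  refine ⟨k, ⟨lt_of_lt_of_le hfe.1 m'_le, ?_, ?_⟩, ?_, ?_⟩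
  · have hvk : v + k < m' := by omega
    rw [g_add_of_lt hvk]
    intro hmem
    exact hfe.2.1 (mem_image_g.mp hmem)
  · intro j hj
    have hj' : v + j < m' := by omega
    rw [g_add_of_lt hj']
    exact mem_image_g.mpr (hfe.2.2 j hj)
  · intro t ht
    have hlt : v + (k + t) < m' := by omega
    rw [show (g p c' + ((k : ℕ) : ZMod (m' + (w - 1))) + ((t : ℕ) : ZMod (m' + (w - 1))))
        = g p c' + (((k + t : ℕ)) : ZMod (m' + (w - 1))) by push_cast; ring,
      g_add_of_lt hlt]
    intro hmem
    refine hfree t ht ?_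
    have hmem' := mem_image_g.mp hmem
    rwa [show c' + ((k + t : ℕ) : ZMod m') = c' + ((k : ℕ) : ZMod m') + ((t : ℕ) : ZMod m')
      by push_cast; ring] at hmem'
  · rw [Finset.image_union, Finset.image_image]
    congr 1
    refine (Finset.image_congr ?_).symm
    intro t ht
    simp only [Finset.coe_range, Set.mem_Iio] at ht
    simp only [Function.comp]
    have hlt : v + (k + t) < m' := by omega
    rw [show c' + ((k : ℕ) : ZMod m') + ((t : ℕ) : ZMod m') = c' + ((k + t : ℕ) : ZMod m')
        by push_cast; ring, ← g_add_of_lt hlt]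
    push_cast
    ring

lemma step_sim_bwd {occ' : Finset (ZMod m')} {c : ZMod (m' + (w - 1))} {y : ℕ}
    {o : Finset (ZMod (m' + (w - 1)))}
    (hw : 1 ≤ w) (hy : 1 ≤ y) (h0 : (0 : ZMod m') ∉ occ')
    (hs : cparkStep (m' + (w - 1)) (occ'.image (g p)) c y = some o)
    (hR : ∀ t : ℕ, t < w → p + (t : ZMod (m' + (w - 1))) ∉ o) :
    ∃ o', c = g p (ginv p c) ∧ cparkStep m' occ' (ginv p c) y = some o' ∧
      o = o'.image (g p) ∧ (0 : ZMod m') ∉ o' := by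
  -- c is in the range of g
  have hc : g p (ginv p c) = c := by
    apply g_ginv
    intro t ht he
    obtain ⟨k, hfe, hfree, rfl⟩ := cparkStep_eq_some_iff.mp hs
    have hk0 : k = 0 := by
      by_contra hne
      have hmem := hfe.2.2 0 (Nat.pos_of_ne_zero hne)
      simp only [Nat.cast_zero, add_zero] at hmem
      rw [he] at hmem
      exact R_not_mem h0 (show t < w by omega) hmem
    subst hk0
    apply hR t (by omega)
    rw [← he]
    refine Finset.mem_union_right _ (Finset.mem_image.mpr ⟨0, Finset.mem_range.mpr hy, ?_⟩)
    push_cast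
    ring
  obtain ⟨c', hc'⟩ : ∃ c'', ginv p c = c'' := ⟨_, rfl⟩
  rw [hc'] at hc ⊢
  rw [← hc] at hs
  obtain ⟨k, hfe, hfree, rfl⟩ := cparkStep_eq_some_iff.mp hs
  have hvm : c'.val < m' := ZMod.val_lt c'
  have hkv : k ≤ m' - c'.val := by
    by_contra hgt
    push_neg at hgt
    have hmem := hfe.2.2 (m' - c'.val) hgt
    rw [g_wrap] at hmem
    have hnm := R_not_mem (p := p) h0 (show (0 : ℕ) < w by omega)
    simp only [Nat.cast_zero, add_zero] at hnm
    exact hnm hmem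
  have hvky : c'.val + k + y ≤ m' := by
    by_contra hgt
    push_neg at hgt
    have ht : m' - c'.val - k < y := by omega
    have heq : g p c' + ((k : ℕ) : ZMod (m' + (w - 1)))
        + ((m' - c'.val - k : ℕ) : ZMod (m' + (w - 1))) = p := by
      rw [show g p c' + ((k : ℕ) : ZMod (m' + (w - 1)))
            + ((m' - c'.val - k : ℕ) : ZMod (m' + (w - 1)))
          = g p c' + (((k + (m' - c'.val - k) : ℕ)) : ZMod (m' + (w - 1))) by push_cast; ring,
        show k + (m' - c'.val - k) = m' - c'.val by omega, g_wrap]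
    apply hR 0 (by omega)
    rw [show p + ((0 : ℕ) : ZMod (m' + (w - 1))) = p by push_cast; ring]
    exact Finset.mem_union_right _
      (Finset.mem_image.mpr ⟨m' - c'.val - k, Finset.mem_range.mpr ht, heq⟩)
  refine ⟨occ' ∪ (Finset.range y).image (fun t : ℕ => c' + ((k : ℕ) : ZMod m') + ((t : ℕ) : ZMod m')),
    hc.symm, ?_, ?_, ?_⟩
  · rw [cparkStep_eq_some_iff]
    refine ⟨k, ⟨by omega, ?_, ?_⟩, ?_, rfl⟩
    · have hvk : c'.val + k < m' := by omega
      intro hmem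
      exact hfe.2.1 (by rw [g_add_of_lt hvk]; exact mem_image_g.mpr hmem)
    · intro j hj
      have hj' : c'.val + j < m' := by omega
      have hmem := hfe.2.2 j hj
      rw [g_add_of_lt hj'] at hmem
      exact mem_image_g.mp hmem
    · intro t ht hmem
      refine hfree t ht ?_
      have hlt : c'.val + (k + t) < m' := by omega
      rw [show (g p c' + ((k : ℕ) : ZMod (m' + (w - 1))) + ((t : ℕ) : ZMod (m' + (w - 1))))
          = g p c' + (((k + t : ℕ)) : ZMod (m' + (w - 1))) by push_cast; ring,
        g_add_of_lt hlt]
      apply mem_image_g.mpr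
      rwa [show c' + ((k : ℕ) : ZMod m') + ((t : ℕ) : ZMod m') = c' + ((k + t : ℕ) : ZMod m')
        by push_cast; ring] at hmem
  · rw [Finset.image_union, Finset.image_image]
    congr 1
    refine (Finset.image_congr ?_).symm
    intro t ht
    simp only [Finset.coe_range, Set.mem_Iio] at ht
    simp only [Function.comp]
    have hlt : c'.val + (k + t) < m' := by omega
    rw [show c' + ((k : ℕ) : ZMod m') + ((t : ℕ) : ZMod m') = c' + ((k + t : ℕ) : ZMod m')
        by push_cast; ring, ← g_add_of_lt hlt]
    push_cast
    ring
  · intro hmem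
    rcases Finset.mem_union.mp hmem with hmem | hmem
    · exact h0 hmem
    · obtain ⟨t, ht, he⟩ := Finset.mem_image.mp hmem
      rw [Finset.mem_range] at ht
      have he' : c' + ((k + t : ℕ) : ZMod m') = 0 := by
        rw [show c' + ((k + t : ℕ) : ZMod m') = c' + ((k : ℕ) : ZMod m') + ((t : ℕ) : ZMod m')
          by push_cast; ring]
        exact he
      have hval : c'.val + (k + t) = 0 := by
        have h1 : ((k + t : ℕ) : ZMod m').val = k + t := ZMod.val_cast_of_lt (by omega)
        have h2 : (c' + ((k + t : ℕ) : ZMod m')).val = c'.val + (k + t) := by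
          rw [ZMod.val_add_of_lt (by rw [h1]; omega), h1]
        rw [he', ZMod.val_zero] at h2
        omega
      have hc0 : c' = 0 := ZMod.val_injective _ (by rw [ZMod.val_zero]; omega)
      apply hR (w - 1) (by omega)
      have hspot : p + ((w - 1 : ℕ) : ZMod (m' + (w - 1)))
          = g p c' + ((k : ℕ) : ZMod (m' + (w - 1))) + ((0 : ℕ) : ZMod (m' + (w - 1))) := by
        rw [hc0, g_zero, show k = 0 by omega]
        push_cast
        ring
      rw [hspot]
      exact Finset.mem_union_right _ (Finset.mem_image.mpr ⟨0, Finset.mem_range.mpr hy, rfl⟩)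

end Contract2
end CPark
namespace CPark
section Contract3
set_option linter.unusedSectionVars false

variable {m' w : ℕ} [NeZero m'] {p : ZMod (m' + (w - 1))}

lemma run_sim_fwd {l' : List (ZMod m' × ℕ)} :
    ∀ {occ' O' : Finset (ZMod m')},
    (∀ pr ∈ l', 1 ≤ pr.2) → (0 : ZMod m') ∉ occ' →
    runFrom m' occ' l' = some O' → (0 : ZMod m') ∉ O' →
    runFrom (m' + (w - 1)) (occ'.image (g p)) (l'.map (Prod.map (g p) id)) =
      some (O'.image (g p)) := by
  induction l' with
  | nil =>
    intro occ' O' _ _ hrun h0'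
    simp only [runFrom_nil, Option.some.injEq] at hrun
    subst hrun
    simp
  | cons pr rest ih =>
    intro occ' O' hsz h0 hrun h0'
    obtain ⟨c', y⟩ := pr
    rw [runFrom_cons] at hrun
    cases hs : cparkStep m' occ' c' y with
    | none => rw [hs] at hrun; simp at hrun
    | some o' =>
      rw [hs] at hrun
      simp only [Option.bind_some] at hrun
      have h0o : (0 : ZMod m') ∉ o' := fun hmem => h0' (subset_of_runFrom hrun hmem)
      have hbig := step_sim_fwd (p := p) (y := y) (hsz (c', y) (List.mem_cons_self)) h0 hs h0o
      simp only [List.map_cons, Prod.map, id_eq]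
      rw [runFrom_cons, hbig]
      simp only [Option.bind_some, id]
      exact ih (fun pr hpr => hsz pr (List.mem_cons_of_mem _ hpr)) h0o hrun h0'

lemma run_sim_bwd {l : List (ZMod (m' + (w - 1)) × ℕ)} (hw : 1 ≤ w) :
    ∀ {occ' : Finset (ZMod m')} {O : Finset (ZMod (m' + (w - 1)))},
    (∀ pr ∈ l, 1 ≤ pr.2) → (0 : ZMod m') ∉ occ' →
    runFrom (m' + (w - 1)) (occ'.image (g p)) l = some O →
    (∀ t : ℕ, t < w → p + (t : ZMod (m' + (w - 1))) ∉ O) →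
    ∃ O', (l.map (Prod.map (ginv p) id)).map (Prod.map (g p) id) = l ∧
      runFrom m' occ' (l.map (Prod.map (ginv p) id)) = some O' ∧
      O = O'.image (g p) ∧ (0 : ZMod m') ∉ O' := by
  induction l with
  | nil =>
    intro occ' O _ h0 hrun hR
    simp only [runFrom_nil, Option.some.injEq] at hrun
    exact ⟨occ', by simp, by simp, hrun.symm, h0⟩
  | cons pr rest ih =>
    intro occ' O hsz h0 hrun hR
    obtain ⟨c, y⟩ := pr
    rw [runFrom_cons] at hrun
    cases hs : cparkStep (m' + (w - 1)) (occ'.image (g p)) c y with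
    | none => rw [hs] at hrun; simp at hrun
    | some o =>
      rw [hs] at hrun
      simp only [Option.bind_some] at hrun
      have hRo : ∀ t : ℕ, t < w → p + (t : ZMod (m' + (w - 1))) ∉ o :=
        fun t ht hmem => hR t ht (subset_of_runFrom hrun hmem)
      obtain ⟨o', hcg, hstep', ho, h0o⟩ :=
        step_sim_bwd (y := y) hw (hsz (c, y) (List.mem_cons_self)) h0 hs hRo
      subst ho
      obtain ⟨O', hmapback, hrun', hO, h0'⟩ :=
        ih (fun pr hpr => hsz pr (List.mem_cons_of_mem _ hpr)) h0o hrun hR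
      refine ⟨O', ?_, ?_, hO, h0'⟩
      · simp only [List.map_cons, Prod.map, id_eq] at hmapback ⊢
        rw [hmapback, ← hcg]
      · simp only [List.map_cons, Prod.map, id_eq]
        rw [runFrom_cons, hstep']
        simpa using hrun'

end Contract3
end CPark
namespace CPark
section Contract4
set_option linter.unusedSectionVars false

variable {m' w : ℕ} [NeZero m'] {p : ZMod (m' + (w - 1))}

lemma neg_natCast_val {k : ℕ} (hk : k < m') (hk1 : 1 ≤ k) :
    (-((k : ℕ) : ZMod m')).val = m' - k := by
  have h1 : ((m' - k : ℕ) : ZMod m') + ((k : ℕ) : ZMod m') = 0 := by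
    rw [← Nat.cast_add, show m' - k + k = m' by omega, ZMod.natCast_self]
  rw [neg_eq_of_add_eq_zero_left h1, ZMod.val_cast_of_lt (by omega)]

lemma cast_key {k j : ℕ} (hk : k < m') (hj : j < k) :
    (p - ((k : ℕ) : ZMod (m' + (w - 1)))) + ((j : ℕ) : ZMod (m' + (w - 1)))
      = g p ((-((k : ℕ) : ZMod m')) + ((j : ℕ) : ZMod m')) := by
  have hk1 : 1 ≤ k := by omega
  have hnegval : (-((k : ℕ) : ZMod m')).val = m' - k := neg_natCast_val hk hk1
  have hjval : (((j : ℕ)) : ZMod m').val = j := ZMod.val_cast_of_lt (by omega)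
  have hval : ((-((k : ℕ) : ZMod m')) + ((j : ℕ) : ZMod m')).val = m' - k + j := by
    rw [ZMod.val_add_of_lt (by rw [hnegval, hjval]; omega), hnegval, hjval]
  unfold g
  rw [hval]
  have hmain : ((w - 1 : ℕ) : ZMod (m' + (w - 1))) + ((m' - k + j : ℕ) : ZMod (m' + (w - 1)))
      = -((k : ℕ) : ZMod (m' + (w - 1))) + ((j : ℕ) : ZMod (m' + (w - 1))) := by
    have h1 : (w - 1) + (m' - k + j) = (m' + (w - 1)) - (k - j) := by omega
    rw [← Nat.cast_add, h1, Nat.cast_sub (show k - j ≤ m' + (w - 1) by omega),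
      ZMod.natCast_self, Nat.cast_sub (le_of_lt hj)]
    ring
  calc p - ((k : ℕ) : ZMod (m' + (w - 1))) + ((j : ℕ) : ZMod (m' + (w - 1)))
      = p + (-((k : ℕ) : ZMod (m' + (w - 1))) + ((j : ℕ) : ZMod (m' + (w - 1)))) := by ring
    _ = p + (((w - 1 : ℕ) : ZMod (m' + (w - 1))) + ((m' - k + j : ℕ) : ZMod (m' + (w - 1)))) := by
        rw [hmain]
    _ = p + ((w - 1 : ℕ) : ZMod (m' + (w - 1))) + ((m' - k + j : ℕ) : ZMod (m' + (w - 1))) := by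
        ring

lemma fwd_run (hw : 1 ≤ w) {ys : List ℕ} (hys : ∀ x ∈ ys, 0 < x)
    {d' : List (ZMod m')} {O' : Finset (ZMod m')} {c' : ZMod m'} {k : ℕ}
    (hlen : d'.length = ys.length)
    (hrun : runFrom m' ∅ (d'.zip ys) = some O')
    (hfe : IsFE m' O' c' k) (hk0 : c' + ((k : ℕ) : ZMod m') = 0) :
    ((runFrom (m' + (w - 1)) ∅
        (((d'.map (g p)) ++ [p - ((k : ℕ) : ZMod (m' + (w - 1)))]).zip (ys ++ [w]))).isSome)
    ∧ runFrom (m' + (w - 1)) ∅ ((d'.map (g p)).zip ys) = some (O'.image (g p))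
    ∧ IsFE (m' + (w - 1)) (O'.image (g p)) (p - ((k : ℕ) : ZMod (m' + (w - 1)))) k := by
  have hc' : c' = -((k : ℕ) : ZMod m') := eq_neg_of_add_eq_zero_left hk0
  have h0' : (0 : ZMod m') ∉ O' := by rw [← hk0]; exact hfe.2.1
  have hszs : ∀ pr ∈ d'.zip ys, 1 ≤ pr.2 := by
    rintro ⟨a, b⟩ hpr
    exact hys b (List.of_mem_zip hpr).2
  have hpre : runFrom (m' + (w - 1)) ∅ ((d'.map (g p)).zip ys) = some (O'.image (g p)) := by
    have h := run_sim_fwd (p := p) (l' := d'.zip ys) hszs (by simp) hrun h0'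
    rw [Finset.image_empty] at h
    rwa [List.zip_map_left]
  have hpnm : p ∉ O'.image (g p) := by
    have := R_not_mem (p := p) (occ' := O') h0' (t := 0) (by omega)
    simpa using this
  have hfeB : IsFE (m' + (w - 1)) (O'.image (g p)) (p - ((k : ℕ) : ZMod (m' + (w - 1)))) k := by
    refine ⟨lt_of_lt_of_le hfe.1 m'_le, ?_, ?_⟩
    · rw [show (p - ((k : ℕ) : ZMod (m' + (w - 1)))) + ((k : ℕ) : ZMod (m' + (w - 1))) = p
        by ring]
      exact hpnm
    · intro j hj
      rw [cast_key hfe.1 hj]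
      apply mem_image_g.mpr
      have hmem := hfe.2.2 j hj
      rwa [hc'] at hmem
  have hlast : (cparkStep (m' + (w - 1)) (O'.image (g p))
      (p - ((k : ℕ) : ZMod (m' + (w - 1)))) w).isSome := by
    have hstep : cparkStep (m' + (w - 1)) (O'.image (g p))
        (p - ((k : ℕ) : ZMod (m' + (w - 1)))) w = some ((O'.image (g p)) ∪
          (Finset.range w).image (fun t : ℕ => (p - ((k : ℕ) : ZMod (m' + (w - 1))))
            + ((k : ℕ) : ZMod (m' + (w - 1))) + ((t : ℕ) : ZMod (m' + (w - 1))))) := by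
      rw [cparkStep_eq_some_iff]
      refine ⟨k, hfeB, ?_, rfl⟩
      intro t ht
      rw [show (p - ((k : ℕ) : ZMod (m' + (w - 1)))) + ((k : ℕ) : ZMod (m' + (w - 1)))
          + ((t : ℕ) : ZMod (m' + (w - 1))) = p + ((t : ℕ) : ZMod (m' + (w - 1))) by ring]
      exact R_not_mem h0' ht
    rw [hstep]
    rfl
  refine ⟨?_, hpre, hfeB⟩
  rw [List.zip_append (by rw [List.length_map, hlen]), runFrom_append, hpre]
  simp only [Option.bind_some]
  obtain ⟨F, hF⟩ := Option.isSome_iff_exists.mp hlast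
  rw [show ([p - ((k : ℕ) : ZMod (m' + (w - 1)))].zip [w])
      = [(p - ((k : ℕ) : ZMod (m' + (w - 1))), w)] from rfl, runFrom_cons, hF]
  simp

end Contract4
end CPark
namespace CPark

/-- Pairs (prefix preferences, last preference shifted) used as intermediate counting set. -/
def TSet (m' : ℕ) (ys : List ℕ) : Type :=
  {x : List (ZMod m') × ZMod m' // x.1.length = ys.length ∧
    ∃ O', runFrom m' ∅ (x.1.zip ys) = some O' ∧
      ∃ k, IsFE m' O' x.2 k ∧ x.2 + ((k : ℕ) : ZMod m') = 0}

section KeyStep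
set_option linter.unusedSectionVars false

variable {m' w : ℕ} [NeZero m']

lemma map_add_cancel (d : List (ZMod m')) (r : ZMod m') :
    (d.map (· + r)).map (· + (-r)) = d := by
  rw [List.map_map, show ((· + (-r)) ∘ (· + r)) = (id : ZMod m' → ZMod m') from
    funext fun z => by simp, List.map_id]

lemma lam_eq_prodmap (r : ZMod m') :
    (fun pr : ZMod m' × ℕ => (pr.1 + r, pr.2)) = Prod.map (· + r) id := by
  funext pr
  cases pr
  rfl

lemma card_S_eq (hw : 1 ≤ w) (ys : List ℕ) (hys : ∀ x ∈ ys, 0 < x) (hsum : ys.sum < m') :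
    Nat.card {c : List (ZMod (m' + (w - 1))) //
      c.length = (ys ++ [w]).length ∧
      (runFrom (m' + (w - 1)) ∅ (c.zip (ys ++ [w]))).isSome} =
    (m' + (w - 1)) * Nat.card (TSet m' ys) := by
  classical
  set S := {c : List (ZMod (m' + (w - 1))) //
      c.length = (ys ++ [w]).length ∧
      (runFrom (m' + (w - 1)) ∅ (c.zip (ys ++ [w]))).isSome} with hSdef
  -- the forward map
  have hmem : ∀ q : ZMod (m' + (w - 1)) × TSet m' ys,
      ((q.2.1.1.map (g q.1)) ++ [q.1 - (((-q.2.1.2).val : ℕ) : ZMod (m' + (w - 1)))]).length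
        = (ys ++ [w]).length ∧
      (runFrom (m' + (w - 1)) ∅
        (((q.2.1.1.map (g q.1)) ++ [q.1 - (((-q.2.1.2).val : ℕ) : ZMod (m' + (w - 1)))]).zip
          (ys ++ [w]))).isSome := by
    rintro ⟨p, ⟨⟨d', c'⟩, hlen, O', hrun, k, hfe, hk0⟩⟩
    dsimp only at hlen hrun hfe hk0
    have hnegval : (-c').val = k := by
      rw [show -c' = ((k : ℕ) : ZMod m') from by
        rw [eq_neg_of_add_eq_zero_left hk0, neg_neg], ZMod.val_cast_of_lt hfe.1]
    simp only [hnegval]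
    constructor
    · simp [hlen]
    · exact (fwd_run (p := p) hw hys hlen hrun hfe hk0).1
  let F : ZMod (m' + (w - 1)) × TSet m' ys → S := fun q =>
    ⟨(q.2.1.1.map (g q.1)) ++ [q.1 - (((-q.2.1.2).val : ℕ) : ZMod (m' + (w - 1)))], hmem q⟩
  have hinj : Function.Injective F := by
    rintro ⟨p₁, ⟨⟨d₁, c₁⟩, hlen₁, O₁, hrun₁, k₁, hfe₁, hk₁⟩⟩
      ⟨p₂, ⟨⟨d₂, c₂⟩, hlen₂, O₂, hrun₂, k₂, hfe₂, hk₂⟩⟩ heq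
    dsimp only at hlen₁ hrun₁ hfe₁ hk₁ hlen₂ hrun₂ hfe₂ hk₂
    have hval : (d₁.map (g p₁)) ++ [p₁ - (((-c₁).val : ℕ) : ZMod (m' + (w - 1)))]
        = (d₂.map (g p₂)) ++ [p₂ - (((-c₂).val : ℕ) : ZMod (m' + (w - 1)))] :=
      congrArg Subtype.val heq
    have hneg₁ : (-c₁).val = k₁ := by
      rw [show -c₁ = ((k₁ : ℕ) : ZMod m') from by
        rw [eq_neg_of_add_eq_zero_left hk₁, neg_neg], ZMod.val_cast_of_lt hfe₁.1]
    have hneg₂ : (-c₂).val = k₂ := by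
      rw [show -c₂ = ((k₂ : ℕ) : ZMod m') from by
        rw [eq_neg_of_add_eq_zero_left hk₂, neg_neg], ZMod.val_cast_of_lt hfe₂.1]
    rw [hneg₁, hneg₂] at hval
    obtain ⟨hpre, hlast⟩ := List.append_inj hval (by simp [hlen₁, hlen₂])
    have hcn : p₁ - ((k₁ : ℕ) : ZMod (m' + (w - 1))) = p₂ - ((k₂ : ℕ) : ZMod (m' + (w - 1))) := by
      simpa using hlast
    have hA := (fwd_run (p := p₁) hw hys hlen₁ hrun₁ hfe₁ hk₁).2.1
    have hB := (fwd_run (p := p₂) hw hys hlen₂ hrun₂ hfe₂ hk₂).2.1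
    rw [hpre] at hA
    rw [hA] at hB
    have hOeq : O₁.image (g p₁) = O₂.image (g p₂) := Option.some.inj hB
    have hfeB₁ := (fwd_run (p := p₁) hw hys hlen₁ hrun₁ hfe₁ hk₁).2.2
    have hfeB₂ := (fwd_run (p := p₂) hw hys hlen₂ hrun₂ hfe₂ hk₂).2.2
    rw [← hOeq, ← hcn] at hfeB₂
    have hkk : k₁ = k₂ := hfeB₁.unique hfeB₂
    have hpp : p₁ = p₂ := by
      have := hcn
      rw [hkk] at this
      have h2 := congrArg (· + ((k₂ : ℕ) : ZMod (m' + (w - 1)))) this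
      simpa using h2
    subst hpp hkk
    have hdd : d₁ = d₂ := List.map_injective_iff.mpr g_inj hpre
    have hcc : c₁ = c₂ := by
      rw [eq_neg_of_add_eq_zero_left hk₁, eq_neg_of_add_eq_zero_left hk₂]
    subst hdd hcc
    rfl
  have hsurj : Function.Surjective F := by
    rintro ⟨c, hlenc, hsome⟩
    have hne : c ≠ [] := by
      intro h
      rw [h] at hlenc
      simp at hlenc
    have hdc : c.dropLast ++ [c.getLast hne] = c := List.dropLast_append_getLast hne
    set d := c.dropLast with hd
    set cn := c.getLast hne with hcn0
    have hlend : d.length = ys.length := by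
      have := hlenc
      rw [← hdc] at this
      simp at this
      omega
    rw [← hdc, List.zip_append (by rw [hlend]), runFrom_append] at hsome
    cases hO : runFrom (m' + (w - 1)) ∅ (d.zip ys) with
    | none => rw [hO] at hsome; simp at hsome
    | some O =>
    rw [hO] at hsome
    simp only [Option.bind_some] at hsome
    rw [show ([cn].zip [w]) = [(cn, w)] from rfl, runFrom_cons] at hsome
    cases hstep : cparkStep (m' + (w - 1)) O cn w with
    | none => rw [hstep] at hsome; simp at hsome
    | some Ffin =>
    obtain ⟨kb, hfeb, hfreeb, hFdef⟩ := cparkStep_eq_some_iff.mp hstep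
    set p := cn + ((kb : ℕ) : ZMod (m' + (w - 1))) with hpdef
    have hR : ∀ t : ℕ, t < w → p + ((t : ℕ) : ZMod (m' + (w - 1))) ∉ O := fun t ht =>
      hfreeb t ht
    have hszs : ∀ pr ∈ d.zip ys, 1 ≤ pr.2 := by
      rintro ⟨a, b⟩ hpr
      exact hys b (List.of_mem_zip hpr).2
    rw [show (∅ : Finset (ZMod (m' + (w - 1)))) = (∅ : Finset (ZMod m')).image (g p) from by
      simp] at hO
    obtain ⟨O', hmapback, hrun', hOeq, h0'⟩ := run_sim_bwd hw hszs (by simp) hO hR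
    have hrecd : (d.map (ginv p)).map (g p) = d := by
      have h1 := congrArg (List.map Prod.fst) hmapback
      rw [List.map_map, List.map_map, List.map_fst_zip (le_of_eq hlend)] at h1
      have h2 : (d.zip ys).map ((Prod.fst ∘ Prod.map (g p) id) ∘ Prod.map (ginv p) id)
          = (d.zip ys).map ((g p ∘ ginv p) ∘
            (Prod.fst : ZMod (m' + (w - 1)) × ℕ → ZMod (m' + (w - 1)))) := by
        apply List.map_congr_left
        intro pr _
        cases pr
        rfl
      rw [h2, ← List.map_map, List.map_fst_zip (le_of_eq hlend)] at h1
      rw [List.map_map]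
      exact h1
    have hrunsmall : runFrom m' ∅ ((d.map (ginv p)).zip ys) = some O' := by
      rw [List.zip_map_left]
      exact hrun'
    have hcardO' : O'.card = ys.sum := by
      have hsz2 : ∀ pr ∈ (d.zip ys).map (Prod.map (ginv p) id), pr.2 ≤ m' := by
        rintro ⟨a, b⟩ hpr
        obtain ⟨⟨a0, b0⟩, hpr0, heq0⟩ := List.mem_map.mp hpr
        have hb : b0 ∈ ys := (List.of_mem_zip hpr0).2
        have : b0 = b := by
          have := congrArg Prod.snd heq0
          simpa using this
        subst this
        calc b0 ≤ ys.sum := List.single_le_sum (fun x _ => Nat.zero_le x) _ hb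
          _ ≤ m' := le_of_lt hsum
      have := card_of_runFrom hrun' hsz2
      rw [Finset.card_empty, zero_add] at this
      rw [this]
      congr 1
      rw [show List.map Prod.snd ((d.zip ys).map (Prod.map (ginv p) id))
          = List.map Prod.snd (d.zip ys) from by
        rw [List.map_map]
        congr 1]
      exact List.map_snd_zip (le_of_eq hlend.symm)
    have hkm' : kb < m' := by
      have h1 := isFE_le_card hfeb
      rw [hOeq, Finset.card_image_of_injective _ g_inj, hcardO'] at h1
      omega
    have hcnp : cn = p - ((kb : ℕ) : ZMod (m' + (w - 1))) := by
      rw [hpdef]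
      ring
    have hfes : IsFE m' O' (-((kb : ℕ) : ZMod m')) kb := by
      refine ⟨hkm', ?_, ?_⟩
      · rw [show -((kb : ℕ) : ZMod m') + ((kb : ℕ) : ZMod m') = 0 by ring]
        exact h0'
      · intro j hj
        have hbig := hfeb.2.2 j hj
        rw [hOeq, hcnp, cast_key hkm' hj] at hbig
        exact mem_image_g.mp hbig
    refine ⟨⟨p, ⟨(d.map (ginv p), -((kb : ℕ) : ZMod m')), by simp [hlend], O', hrunsmall,
      kb, hfes, by ring⟩⟩, ?_⟩
    apply Subtype.ext
    show (d.map (ginv p)).map (g p) ++ [p - (((- -((kb : ℕ) : ZMod m')).val : ℕ)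
      : ZMod (m' + (w - 1)))] = c
    rw [hrecd, show (- -((kb : ℕ) : ZMod m')).val = kb from by
      rw [neg_neg, ZMod.val_cast_of_lt hkm'], ← hcnp, hdc]
  have hcardeq : Nat.card (ZMod (m' + (w - 1)) × TSet m' ys) = Nat.card S :=
    Nat.card_congr (Equiv.ofBijective F ⟨hinj, hsurj⟩)
  rw [← hcardeq, Nat.card_prod, Nat.card_zmod]

end KeyStep
end CPark
namespace CPark
section KeyStep2
set_option linter.unusedSectionVars false

variable {m' : ℕ} [NeZero m']

lemma map_add_cancel₂ (d : List (ZMod m')) (r : ZMod m') :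
    (d.map (· + (-r))).map (· + r) = d := by
  rw [List.map_map, show ((· + r) ∘ (· + (-r))) = (id : ZMod m' → ZMod m') from
    funext fun z => by simp, List.map_id]

lemma card_T_eq (ys : List ℕ) (hys : ∀ x ∈ ys, 0 < x) (hsum : ys.sum < m') :
    Nat.card (TSet m' ys) =
      Nat.card {c : List (ZMod m') // c.length = ys.length ∧ (runFrom m' ∅ (c.zip ys)).isSome} := by
  classical
  set S' := {c : List (ZMod m') // c.length = ys.length ∧ (runFrom m' ∅ (c.zip ys)).isSome}
    with hS'def
  have hrunshift : ∀ (d : List (ZMod m')) (r : ZMod m') (O : Finset (ZMod m')),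
      runFrom m' ∅ (d.zip ys) = some O →
      runFrom m' ∅ ((d.map (· + r)).zip ys) = some (O.image (· + r)) := by
    intro d r O hrun
    have h := runFrom_shift (occ := (∅ : Finset (ZMod m'))) (l := d.zip ys) r
    rw [Finset.image_empty, hrun] at h
    rw [List.zip_map_left, ← lam_eq_prodmap]
    simpa using h
  have hmem : ∀ x : TSet m' ys,
      (x.1.1.map (· + (-x.1.2))).length = ys.length ∧
      (runFrom m' ∅ ((x.1.1.map (· + (-x.1.2))).zip ys)).isSome := by
    rintro ⟨⟨d', c'⟩, hlen, O', hrun, k, hfe, hk0⟩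
    dsimp only at hlen hrun hfe hk0 ⊢
    refine ⟨by simp [hlen], ?_⟩
    rw [hrunshift d' (-c') O' hrun]
    rfl
  let E : TSet m' ys → S' := fun x => ⟨x.1.1.map (· + (-x.1.2)), hmem x⟩
  have hinj : Function.Injective E := by
    rintro ⟨⟨d₁, c₁⟩, hlen₁, O₁, hrun₁, k₁, hfe₁, hk₁⟩
      ⟨⟨d₂, c₂⟩, hlen₂, O₂, hrun₂, k₂, hfe₂, hk₂⟩ heq
    dsimp only at hlen₁ hrun₁ hfe₁ hk₁ hlen₂ hrun₂ hfe₂ hk₂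
    have hval : d₁.map (· + (-c₁)) = d₂.map (· + (-c₂)) := congrArg Subtype.val heq
    have hA := hrunshift d₁ (-c₁) O₁ hrun₁
    have hB := hrunshift d₂ (-c₂) O₂ hrun₂
    rw [hval] at hA
    rw [hA] at hB
    have hOeq : O₁.image (· + (-c₁)) = O₂.image (· + (-c₂)) := Option.some.inj hB
    have hfeL₁ : IsFE m' (O₁.image (· + (-c₁))) 0 k₁ := by
      have := (isFE_shift (occ := O₁) (c := c₁) (k := k₁) (-c₁)).mpr hfe₁
      simpa using this
    have hfeL₂ : IsFE m' (O₁.image (· + (-c₁))) 0 k₂ := by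
      have := (isFE_shift (occ := O₂) (c := c₂) (k := k₂) (-c₂)).mpr hfe₂
      rw [← hOeq] at this
      simpa using this
    have hkk : k₁ = k₂ := hfeL₁.unique hfeL₂
    have hcc : c₁ = c₂ := by
      rw [eq_neg_of_add_eq_zero_left hk₁, eq_neg_of_add_eq_zero_left hk₂, hkk]
    subst hcc hkk
    have hdd : d₁ = d₂ := by
      have h1 := congrArg (List.map (· + c₁)) hval
      rwa [map_add_cancel₂ d₁ c₁, map_add_cancel₂ d₂ c₁] at h1
    subst hdd
    rfl
  have hsurj : Function.Surjective E := by
    rintro ⟨d'', hlen, hsome⟩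
    obtain ⟨O'', hO''⟩ := Option.isSome_iff_exists.mp hsome
    have hcard : O''.card = ys.sum := by
      have hsz : ∀ pr ∈ d''.zip ys, pr.2 ≤ m' := by
        rintro ⟨a, b⟩ hpr
        have hb : b ∈ ys := (List.of_mem_zip hpr).2
        calc b ≤ ys.sum := List.single_le_sum (fun x _ => Nat.zero_le x) _ hb
          _ ≤ m' := le_of_lt hsum
      have := card_of_runFrom hO'' hsz
      rw [Finset.card_empty, zero_add, List.map_snd_zip (le_of_eq hlen.symm)] at this
      exact this
    have hexempty : ∃ s, s ∉ O'' := by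
      by_contra hfull
      push_neg at hfull
      have huniv : O'' = Finset.univ := Finset.eq_univ_iff_forall.mpr hfull
      rw [huniv, Finset.card_univ, ZMod.card m'] at hcard
      omega
    obtain ⟨k, hfek⟩ := exists_isFE (0 : ZMod m') hexempty
    refine ⟨⟨⟨d''.map (· + (-((k : ℕ) : ZMod m'))), -((k : ℕ) : ZMod m')⟩, by simp [hlen],
      O''.image (· + (-((k : ℕ) : ZMod m'))), ?_, k, ?_, by ring⟩, ?_⟩
    · exact hrunshift d'' _ O'' hO''
    · have := (isFE_shift (occ := O'') (c := 0) (k := k) (-((k : ℕ) : ZMod m'))).mpr hfek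
      simpa using this
    · apply Subtype.ext
      show (d''.map (· + (-((k : ℕ) : ZMod m')))).map (· + (- -((k : ℕ) : ZMod m'))) = d''
      exact map_add_cancel d'' _
  exact Nat.card_congr (Equiv.ofBijective E ⟨hinj, hsurj⟩)

end KeyStep2
end CPark
namespace CPark

lemma key_step (m' w : ℕ) [NeZero m'] (hw : 1 ≤ w) (ys : List ℕ)
    (hys : ∀ x ∈ ys, 0 < x) (hsum : ys.sum < m') :
    Nat.card {c : List (ZMod (m' + (w - 1))) // c.length = (ys ++ [w]).length ∧
      (runFrom (m' + (w - 1)) ∅ (c.zip (ys ++ [w]))).isSome} =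
    (m' + (w - 1)) * Nat.card {c : List (ZMod m') // c.length = ys.length ∧
      (runFrom m' ∅ (c.zip ys)).isSome} := by
  rw [card_S_eq hw ys hys hsum, card_T_eq ys hys hsum]

lemma main_count : ∀ (y : List ℕ) (m : ℕ), (∀ x ∈ y, 0 < x) → y.sum < m →
    Nat.card {c : List (ZMod m) // c.length = y.length ∧ (runFrom m ∅ (c.zip y)).isSome} =
      ∏ i ∈ Finset.range y.length,
        ((y.take (i + 1)).sum + (y.length - 1 - i) + (m - y.sum)) := by
  intro y
  induction y using List.reverseRecOn with
  | nil =>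
    intro m hy hm
    haveI hne : Nonempty {c : List (ZMod m) // c.length = ([] : List ℕ).length ∧
        (runFrom m ∅ (c.zip ([] : List ℕ))).isSome} := ⟨⟨[], rfl, by simp⟩⟩
    haveI : Subsingleton {c : List (ZMod m) // c.length = ([] : List ℕ).length ∧
        (runFrom m ∅ (c.zip ([] : List ℕ))).isSome} := ⟨by
      rintro ⟨c₁, h₁, -⟩ ⟨c₂, h₂, -⟩
      apply Subtype.ext
      simp only [List.length_nil, List.length_eq_zero_iff] at h₁ h₂
      show c₁ = c₂
      rw [h₁, h₂]⟩
    rw [Nat.card_unique]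
    simp
  | append_singleton ys w ih =>
    intro m hy hm
    have hw : 1 ≤ w := hy w (by simp)
    have hys : ∀ x ∈ ys, 0 < x := fun x hx => hy x (by simp [hx])
    have hsumapp : (ys ++ [w]).sum = ys.sum + w := by simp
    rw [hsumapp] at hm
    obtain ⟨m', rfl⟩ : ∃ m'', m = m'' + (w - 1) := ⟨m - (w - 1), by omega⟩
    haveI : NeZero m' := ⟨by omega⟩
    have hsum' : ys.sum < m' := by omega
    rw [key_step m' w hw ys hys hsum', ih m' hys hsum']
    rw [show (ys ++ [w]).length = ys.length + 1 from by simp, Finset.prod_range_succ]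
    have hlast : ((ys ++ [w]).take (ys.length + 1)).sum + (ys.length + 1 - 1 - ys.length)
        + (m' + (w - 1) - (ys ++ [w]).sum) = m' + (w - 1) := by
      rw [List.take_of_length_le (by simp), hsumapp]
      omega
    rw [hlast, mul_comm]
    congr 1
    apply Finset.prod_congr rfl
    intro i hi
    rw [Finset.mem_range] at hi
    rw [List.take_append_of_le_length (by omega), hsumapp]
    omega

end CPark


/-- The number of circular parking sequences for car sizes `y` on
`M = y.sum + 1` circular spots is `M · ∏_{i=1}^{n-1} (y₁ + ⋯ + yᵢ + n + 1 - i)`. -/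
theorem circular_parking_count (y : List ℕ) (hy : ∀ x ∈ y, 0 < x) :
    Nat.card {c : List (ZMod (y.sum + 1)) // IsCircParkingSeq y c} =
      (y.sum + 1) *
        ∏ i ∈ Finset.range (y.length - 1), ((y.take (i + 1)).sum + y.length - i) := by
  haveI : NeZero (y.sum + 1) := ⟨Nat.succ_ne_zero _⟩
  have h1 : Nat.card {c : List (ZMod (y.sum + 1)) // IsCircParkingSeq y c}
      = Nat.card {c : List (ZMod (y.sum + 1)) // c.length = y.length ∧
          (CPark.runFrom (y.sum + 1) ∅ (c.zip y)).isSome} := by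
    apply Nat.card_congr
    exact Equiv.subtypeEquivRight (fun c => Iff.rfl)
  rw [h1, CPark.main_count y (y.sum + 1) hy (by omega)]
  rcases Nat.eq_zero_or_pos y.length with hn | hn
  · rw [List.length_eq_zero_iff] at hn
    subst hn
    simp
  · obtain ⟨n0, hn0⟩ : ∃ n0, y.length = n0 + 1 := ⟨y.length - 1, by omega⟩
    rw [hn0, Finset.prod_range_succ]
    have hlast : (y.take (n0 + 1)).sum + (n0 + 1 - 1 - n0) + (y.sum + 1 - y.sum)
        = y.sum + 1 := by
      rw [show y.take (n0 + 1) = y from List.take_of_length_le (by omega)]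
      omega
    rw [hlast, mul_comm, show n0 + 1 - 1 = n0 from rfl]
    congr 1
    apply Finset.prod_congr rfl
    intro i hi
    rw [Finset.mem_range] at hi
    omega
end

section
/- A sequence (c_1, ..., c_n) with c_i ∈ {1, ..., M-1} is a parking sequence for (y_1, ..., y_n) on a linear lot of y_1 + ··· + y_n spots if and only if it is a circular parking sequence on M = y_1 + ··· + y_n + 1 circular spots in which spot M remains empty. -/
lemma find?_range'_eq_some {p : ℕ → Bool} :
    ∀ {m c j : ℕ}, c ≤ j → j < c + m → p j = true →
    (∀ i, c ≤ i → i < j → p i = false) → (List.range' c m).find? p = some j := by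
  intro m
  induction m with
  | zero => intro c j h1 h2 _ _; omega
  | succ m ih =>
    intro c j h1 h2 h3 h4
    rw [List.range'_succ, List.find?_cons]
    rcases eq_or_lt_of_le h1 with rfl | hlt
    · rw [h3]
    · rw [h4 c le_rfl hlt]
      exact ih hlt (by omega) h3 (fun i hi1 hi2 => h4 i (by omega) hi2)

lemma flatMap_singleton_map {α β : Type*} (l : List α) (f : α → β) :
    (l.flatMap fun a => List.singleton (f a)) = l.map f := by
  induction l with
  | nil => rfl
  | cons a l ih =>
    simp only [List.flatMap_cons, List.map_cons, List.singleton] at ih ⊢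
    rw [ih]; rfl

lemma cast_injN {N a b : ℕ} (ha : a < N + 1) (hb : b < N + 1)
    (h : (a : ZMod (N+1)) = b) : a = b := by
  have := congrArg ZMod.val h
  rwa [ZMod.val_cast_of_lt ha, ZMod.val_cast_of_lt hb] at this

lemma mem_phi {N : ℕ} {S : Finset ℕ} (hS : S ⊆ Finset.Icc 1 N) {a : ℕ} (ha : a ≤ N) :
    (a : ZMod (N+1)) ∈ S.image (Nat.cast : ℕ → ZMod (N+1)) ↔ a ∈ S := by
  simp only [Finset.mem_image]
  constructor
  · rintro ⟨s, hs, hsa⟩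
    have hsN := hS hs
    rw [Finset.mem_Icc] at hsN
    have := cast_injN (by omega) (by omega) hsa
    exact this ▸ hs
  · intro h; exact ⟨a, h, rfl⟩

lemma zero_not_mem_phi {N : ℕ} {S : Finset ℕ} (hS : S ⊆ Finset.Icc 1 N) :
    (0 : ZMod (N+1)) ∉ S.image (Nat.cast : ℕ → ZMod (N+1)) := by
  simp only [Finset.mem_image]
  rintro ⟨s, hs, hs0⟩
  have hsN := hS hs
  rw [Finset.mem_Icc] at hsN
  have h0 : (s : ZMod (N+1)) = ((0 : ℕ) : ZMod (N+1)) := by simpa using hs0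
  have := cast_injN (by omega) (by omega) h0
  omega

lemma cfind {N : ℕ} (S : Finset ℕ) (hS : S ⊆ Finset.Icc 1 N) {c j : ℕ}
    (hc1 : 1 ≤ c) (hcj : c ≤ j) (hjN : j ≤ N + 1) (hj : j ≤ N → j ∉ S)
    (hmin : ∀ i, c ≤ i → i < j → i ∈ S) :
    (List.range (N+1)).find?
      (fun k => decide (((c : ℕ) : ZMod (N+1)) + (k : ZMod (N+1)) ∉ S.image (Nat.cast : ℕ → ZMod (N+1))))
      = some (((j - c : ℕ) : ZMod (N+1))) := by
  simp only [bind, pure, List.bind_eq_flatMap]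
  erw [flatMap_singleton_map, List.find?_map, List.range_eq_range']
  have hfind : (List.range' 0 (N+1)).find?
      ((fun kk : ZMod (N+1) => decide (((c : ℕ) : ZMod (N+1)) + kk ∉
          S.image (Nat.cast : ℕ → ZMod (N+1)))) ∘ (Nat.cast : ℕ → ZMod (N+1)))
      = some (j - c) := by
    apply find?_range'_eq_some (by omega) (by omega)
    · simp only [Function.comp_apply, decide_eq_true_eq]
      have hcast : ((c : ℕ) : ZMod (N+1)) + ((j - c : ℕ) : ZMod (N+1)) = ((j : ℕ) : ZMod (N+1)) := by
        rw [← Nat.cast_add]; congr 1; omega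
      rw [hcast]
      rcases Nat.lt_or_ge j (N+1) with h | h
      · rw [mem_phi hS (by omega)]; exact hj (by omega)
      · obtain rfl : j = N + 1 := by omega
        rw [show ((N+1 : ℕ) : ZMod (N+1)) = 0 from ZMod.natCast_self (N+1)]
        exact zero_not_mem_phi hS
    · intro i hi0 hij
      simp only [Function.comp_apply, decide_eq_false_iff_not, not_not]
      have hcast : ((c : ℕ) : ZMod (N+1)) + ((i : ℕ) : ZMod (N+1)) = ((c + i : ℕ) : ZMod (N+1)) := by
        push_cast; ring
      rw [hcast, mem_phi hS (by omega)]
      exact hmin (c+i) (by omega) (by omega)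
  rw [hfind]
  rfl

lemma parkStep_eq_none {M : ℕ} {occ : Finset ℕ} {c y : ℕ}
    (hF : (List.range' c (M + 1 - c)).find? (fun j => decide (j ∉ occ)) = none) :
    parkStep M occ c y = none := by
  unfold parkStep; rw [hF]

lemma parkStep_eq_some {M : ℕ} {occ : Finset ℕ} {c y j : ℕ}
    (hF : (List.range' c (M + 1 - c)).find? (fun j => decide (j ∉ occ)) = some j) :
    parkStep M occ c y =
      if j + y - 1 ≤ M ∧ ∀ k ∈ Finset.Ico j (j + y), k ∉ occ then
        some (occ ∪ Finset.Ico j (j + y))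
      else none := by
  unfold parkStep; rw [hF]

lemma cparkStep_eq_some {M : ℕ} {occ : Finset (ZMod M)} {c : ZMod M} {y : ℕ} {k : ZMod M}
    (hF : (List.range M).find? (fun k => decide (c + (k : ZMod M) ∉ occ)) = some k) :
    cparkStep M occ c y =
      if ∀ s ∈ (Finset.range y).image (fun t : ℕ => c + k + (t : ZMod M)), s ∉ occ
      then some (occ ∪ (Finset.range y).image (fun t : ℕ => c + k + (t : ZMod M)))
      else none := by
  unfold cparkStep; rw [hF]

lemma find?_range'_elim {p : ℕ → Bool} :
    ∀ {m c j : ℕ}, (List.range' c m).find? p = some j →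
      c ≤ j ∧ j < c + m ∧ p j = true ∧ ∀ i, c ≤ i → i < j → p i = false := by
  intro m
  induction m with
  | zero => intro c j h; simp at h
  | succ m ih =>
    intro c j h
    rw [List.range'_succ, List.find?_cons] at h
    cases hpc : p c with
    | true =>
      rw [hpc] at h
      obtain rfl : c = j := by simpa using h
      exact ⟨le_rfl, by omega, hpc, fun i h1 h2 => by omega⟩
    | false =>
      rw [hpc] at h
      obtain ⟨h1, h2, h3, h4⟩ := ih h
      refine ⟨by omega, by omega, h3, fun i hi1 hi2 => ?_⟩
      rcases eq_or_lt_of_le hi1 with rfl | hlt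
      · exact hpc
      · exact h4 i hlt hi2

lemma spots_eq {N j yi : ℕ} :
    (Finset.range yi).image (fun t : ℕ => ((j : ℕ) : ZMod (N+1)) + (t : ZMod (N+1))) =
    (Finset.Ico j (j+yi)).image (Nat.cast : ℕ → ZMod (N+1)) := by
  ext x
  simp only [Finset.mem_image, Finset.mem_range, Finset.mem_Ico]
  constructor
  · rintro ⟨t, ht, rfl⟩
    exact ⟨j + t, ⟨by omega, by omega⟩, by push_cast; ring⟩
  · rintro ⟨a, ⟨h1, h2⟩, rfl⟩
    refine ⟨a - j, by omega, ?_⟩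
    rw [← Nat.cast_add]
    congr 1
    omega

lemma step_some {N : ℕ} {S S' : Finset ℕ} (hS : S ⊆ Finset.Icc 1 N) {c yi : ℕ}
    (hc1 : 1 ≤ c) (hc2 : c ≤ N) (hyi : 0 < yi)
    (h : parkStep N S c yi = some S') :
    S' ⊆ Finset.Icc 1 N ∧
    cparkStep (N+1) (S.image (Nat.cast : ℕ → ZMod (N+1))) ((c : ℕ) : ZMod (N+1)) yi
      = some (S'.image (Nat.cast : ℕ → ZMod (N+1))) := by
  cases hF : (List.range' c (N + 1 - c)).find? (fun j => decide (j ∉ S)) with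
  | none => rw [parkStep_eq_none hF] at h; exact absurd h (by simp)
  | some j =>
    rw [parkStep_eq_some hF] at h
    split at h
    case isFalse => exact absurd h (by simp)
    case isTrue hcond =>
      obtain ⟨hcond1, hcond2⟩ := hcond
      obtain rfl : S ∪ Finset.Ico j (j + yi) = S' := by simpa using h
      obtain ⟨hj1, hj2, hj3, hj4⟩ := find?_range'_elim hF
      have hjS : j ∉ S := by simpa using hj3
      have hjN : j ≤ N := by omega
      have hmin : ∀ i, c ≤ i → i < j → i ∈ S := by
        intro i h1 h2
        have := hj4 i h1 h2
        simpa using this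
      have hf' := cfind S hS hc1 hj1 (by omega) (fun _ => hjS) hmin
      rw [cparkStep_eq_some hf']
      have hcast : ((c : ℕ) : ZMod (N+1)) + ((j - c : ℕ) : ZMod (N+1)) = ((j : ℕ) : ZMod (N+1)) := by
        rw [← Nat.cast_add]; congr 1; omega
      rw [hcast, spots_eq]
      have hvac : ∀ s ∈ (Finset.Ico j (j+yi)).image (Nat.cast : ℕ → ZMod (N+1)),
          s ∉ S.image (Nat.cast : ℕ → ZMod (N+1)) := by
        rintro s hs
        rw [Finset.mem_image] at hs
        obtain ⟨a, ha, rfl⟩ := hs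
        rw [Finset.mem_Ico] at ha
        rw [mem_phi hS (by omega)]
        exact hcond2 a (Finset.mem_Ico.2 ha)
      rw [if_pos hvac, ← Finset.image_union]
      refine ⟨?_, rfl⟩
      intro a ha
      rw [Finset.mem_union] at ha
      rcases ha with ha | ha
      · exact hS ha
      · rw [Finset.mem_Ico] at ha; rw [Finset.mem_Icc]; omega

lemma step_none {N : ℕ} {S : Finset ℕ} (hS : S ⊆ Finset.Icc 1 N) {c yi : ℕ}
    (hc1 : 1 ≤ c) (hc2 : c ≤ N) (hyi : 0 < yi)
    (h : parkStep N S c yi = none) :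
    cparkStep (N+1) (S.image (Nat.cast : ℕ → ZMod (N+1))) ((c : ℕ) : ZMod (N+1)) yi = none ∨
    ∃ T, cparkStep (N+1) (S.image (Nat.cast : ℕ → ZMod (N+1))) ((c : ℕ) : ZMod (N+1)) yi = some T
         ∧ (0 : ZMod (N+1)) ∈ T := by
  cases hF : (List.range' c (N + 1 - c)).find? (fun j => decide (j ∉ S)) with
  | none =>
    -- all of [c, N] is occupied; circular car finds spot 0
    have hmin : ∀ i, c ≤ i → i ≤ N → i ∈ S := by
      intro i h1 h2
      have := List.find?_eq_none.1 hF i (by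
        rw [List.mem_range'_1]; omega)
      simpa using this
    have hf' := cfind S hS hc1 (j := N+1) (by omega) le_rfl (by omega)
      (fun i h1 h2 => hmin i h1 (by omega))
    rw [cparkStep_eq_some hf']
    have hcast : ((c : ℕ) : ZMod (N+1)) + ((N + 1 - c : ℕ) : ZMod (N+1)) = 0 := by
      rw [← Nat.cast_add, show c + (N + 1 - c) = N + 1 from by omega]
      exact ZMod.natCast_self (N+1)
    have h0 : (0 : ZMod (N+1)) ∈ (Finset.range yi).image
        (fun t : ℕ => ((c : ℕ) : ZMod (N+1)) + ((N + 1 - c : ℕ) : ZMod (N+1)) + (t : ZMod (N+1))) := by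
      rw [Finset.mem_image]
      exact ⟨0, Finset.mem_range.2 hyi, by rw [hcast]; simp⟩
    by_cases hcond : ∀ s ∈ (Finset.range yi).image
        (fun t : ℕ => ((c : ℕ) : ZMod (N+1)) + ((N + 1 - c : ℕ) : ZMod (N+1)) + (t : ZMod (N+1))),
        s ∉ S.image (Nat.cast : ℕ → ZMod (N+1))
    · right
      exact ⟨_, by rw [if_pos hcond], Finset.mem_union_right _ h0⟩
    · left
      rw [if_neg hcond]
  | some j =>
    rw [parkStep_eq_some hF] at h
    rw [ite_eq_right_iff] at h
    have hcond : ¬(j + yi - 1 ≤ N ∧ ∀ k ∈ Finset.Ico j (j + yi), k ∉ S) := by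
      intro hc; exact absurd (h hc) (by simp)
    obtain ⟨hj1, hj2, hj3, hj4⟩ := find?_range'_elim hF
    have hjS : j ∉ S := by simpa using hj3
    have hjN : j ≤ N := by omega
    have hmin : ∀ i, c ≤ i → i < j → i ∈ S := by
      intro i h1 h2; have := hj4 i h1 h2; simpa using this
    have hf' := cfind S hS hc1 hj1 (by omega) (fun _ => hjS) hmin
    rw [cparkStep_eq_some hf']
    have hcast : ((c : ℕ) : ZMod (N+1)) + ((j - c : ℕ) : ZMod (N+1)) = ((j : ℕ) : ZMod (N+1)) := by
      rw [← Nat.cast_add]; congr 1; omega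
    rw [hcast]
    by_cases hw : j + yi ≤ N + 1
    · -- block fits linearly, so some spot in it must be occupied
      left
      rw [spots_eq]
      have : ∃ k ∈ Finset.Ico j (j + yi), k ∈ S := by
        push_neg at hcond
        obtain ⟨k, hk1, hk2⟩ := hcond (by omega)
        exact ⟨k, hk1, hk2⟩
      obtain ⟨k, hk, hkS⟩ := this
      rw [if_neg]
      push_neg
      refine ⟨(k : ZMod (N+1)), Finset.mem_image.2 ⟨k, hk, rfl⟩, ?_⟩
      rw [mem_phi hS (by rw [Finset.mem_Ico] at hk; omega)]
      exact hkS
    · -- block wraps around; spot 0 is covered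
      have h0 : (0 : ZMod (N+1)) ∈ (Finset.range yi).image
          (fun t : ℕ => ((j : ℕ) : ZMod (N+1)) + (t : ZMod (N+1))) := by
        rw [Finset.mem_image]
        refine ⟨N + 1 - j, Finset.mem_range.2 (by omega), ?_⟩
        rw [← Nat.cast_add, show j + (N + 1 - j) = N + 1 from by omega]
        exact ZMod.natCast_self (N+1)
      by_cases hcond2 : ∀ s ∈ (Finset.range yi).image
          (fun t : ℕ => ((j : ℕ) : ZMod (N+1)) + (t : ZMod (N+1))),
          s ∉ S.image (Nat.cast : ℕ → ZMod (N+1))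
      · right
        exact ⟨_, by rw [if_pos hcond2], Finset.mem_union_right _ h0⟩
      · left
        rw [if_neg hcond2]

lemma cparkStep_eq_none {M : ℕ} {occ : Finset (ZMod M)} {c : ZMod M} {y : ℕ}
    (hF : (List.range M).find? (fun k => decide (c + (k : ZMod M) ∉ occ)) = none) :
    cparkStep M occ c y = none := by
  unfold cparkStep; rw [hF]

lemma cstep_mono {M : ℕ} {occ occ' : Finset (ZMod M)} {c : ZMod M} {y : ℕ}
    (h : cparkStep M occ c y = some occ') : occ ⊆ occ' := by
  cases hF : (List.range M).find? (fun k => decide (c + (k : ZMod M) ∉ occ)) with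
  | none => rw [cparkStep_eq_none hF] at h; exact absurd h (by simp)
  | some k =>
    rw [cparkStep_eq_some hF] at h
    split at h
    · obtain rfl : occ ∪ _ = occ' := by simpa using h
      exact Finset.subset_union_left
    · exact absurd h (by simp)

lemma crun_mono {M : ℕ} : ∀ (l : List (ZMod M × ℕ)) (occ T : Finset (ZMod M)),
    l.foldlM (fun o p => cparkStep M o p.1 p.2) occ = some T → occ ⊆ T := by
  intro l
  induction l with
  | nil =>
    intro occ T h
    simp only [List.foldlM_nil] at h
    obtain rfl : occ = T := by simpa using h
    exact subset_rfl
  | cons a l ih =>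
    intro occ T h
    rw [List.foldlM_cons] at h
    cases hs : cparkStep M occ a.1 a.2 with
    | none => rw [hs] at h; simp at h
    | some o1 =>
      rw [hs] at h
      simp only [Option.bind_eq_bind, Option.bind_some] at h
      exact (cstep_mono hs).trans (ih o1 T h)

lemma run_equiv (N : ℕ) : ∀ (l : List (ℕ × ℕ)),
    (∀ p ∈ l, 1 ≤ p.1 ∧ p.1 ≤ N ∧ 0 < p.2) →
    ∀ (S : Finset ℕ), S ⊆ Finset.Icc 1 N →
    ((l.foldlM (fun occ p => parkStep N occ p.1 p.2) S).isSome ↔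
     ∃ T, (l.map (fun p : ℕ × ℕ => (((p.1 : ℕ) : ZMod (N+1)), p.2))).foldlM
            (fun occ p => cparkStep (N+1) occ p.1 p.2)
            (S.image (Nat.cast : ℕ → ZMod (N+1))) = some T
          ∧ (0 : ZMod (N+1)) ∉ T) := by
  intro l
  induction l with
  | nil =>
    intro _ S hS
    simp only [List.foldlM_nil, List.map_nil]
    constructor
    · intro _
      exact ⟨S.image Nat.cast, by simp, zero_not_mem_phi hS⟩
    · intro _; simp
  | cons a l ih =>
    intro hl S hS
    have ha := hl a List.mem_cons_self
    rw [List.map_cons, List.foldlM_cons, List.foldlM_cons]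
    constructor
    · intro h
      cases hs : parkStep N S a.1 a.2 with
      | none => rw [hs] at h; simp at h
      | some S' =>
        rw [hs] at h
        simp only [Option.bind_eq_bind, Option.bind_some] at h
        obtain ⟨hS', hcs⟩ := step_some hS ha.1 ha.2.1 ha.2.2 hs
        rw [hcs]
        simp only [Option.bind_eq_bind, Option.bind_some]
        exact (ih (fun p hp => hl p (List.mem_cons_of_mem a hp)) S' hS').1 h
    · rintro ⟨T, hT, h0⟩
      cases hcs : cparkStep (N+1) (S.image Nat.cast) ((a.1 : ℕ) : ZMod (N+1)) a.2 with
      | none => rw [hcs] at hT; simp at hT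
      | some T1 =>
        rw [hcs] at hT
        simp only [Option.bind_eq_bind, Option.bind_some] at hT
        have h0T1 : (0 : ZMod (N+1)) ∉ T1 := fun hmem => h0 (crun_mono _ _ _ hT hmem)
        cases hs : parkStep N S a.1 a.2 with
        | none =>
          rcases step_none hS ha.1 ha.2.1 ha.2.2 hs with hn | ⟨T', hT', h0T'⟩
          · rw [hn] at hcs; exact absurd hcs (by simp)
          · rw [hT'] at hcs
            obtain rfl : T' = T1 := by simpa using hcs
            exact absurd h0T' h0T1
        | some S' =>
          obtain ⟨hS', hcs'⟩ := step_some hS ha.1 ha.2.1 ha.2.2 hs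
          rw [hcs'] at hcs
          obtain rfl : S'.image (Nat.cast : ℕ → ZMod (N+1)) = T1 := by simpa using hcs
          simp only [Option.bind_eq_bind, Option.bind_some]
          exact (ih (fun p hp => hl p (List.mem_cons_of_mem a hp)) S' hS').2 ⟨T, hT, h0⟩

/-- A sequence with entries in `{1, …, M-1}` is a linear parking sequence iff it is a
circular parking sequence on `M = y.sum + 1` spots in which spot `M` (i.e. `0` in
`ZMod M`) remains empty. -/
theorem linear_iff_circular_with_empty (y c : List ℕ) (hy : ∀ x ∈ y, 0 < x)
    (hlen : c.length = y.length) (hc : ∀ x ∈ c, 1 ≤ x ∧ x ≤ y.sum) :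
    IsParkingSeq y c ↔
      ∃ occ : Finset (ZMod (y.sum + 1)),
        cparkRun (y.sum + 1) ((c.map (Nat.cast : ℕ → ZMod (y.sum + 1))).zip y) = some occ ∧
        (0 : ZMod (y.sum + 1)) ∉ occ := by
  have hzip : ((c.map (Nat.cast : ℕ → ZMod (y.sum+1))).zip y)
      = (c.zip y).map (fun p : ℕ × ℕ => (((p.1 : ℕ) : ZMod (y.sum+1)), p.2)) := by
    rw [List.zip_map_left]
    rfl
  have hl : ∀ p ∈ c.zip y, 1 ≤ p.1 ∧ p.1 ≤ y.sum ∧ 0 < p.2 := by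
    intro p hp
    obtain ⟨h1, h2⟩ := List.of_mem_zip hp
    exact ⟨(hc p.1 h1).1, (hc p.1 h1).2, hy p.2 h2⟩
  have key := run_equiv y.sum (c.zip y) hl ∅ (by simp)
  rw [Finset.image_empty] at key
  constructor
  · rintro ⟨_, _, hsome⟩
    rw [parkRun] at hsome
    obtain ⟨T, hT, h0⟩ := key.1 hsome
    refine ⟨T, ?_, h0⟩
    rw [cparkRun, hzip]
    exact hT
  · rintro ⟨T, hT, h0⟩
    rw [cparkRun, hzip] at hT
    exact ⟨hlen, fun x hx => (hc x hx).1, by rw [parkRun]; exact key.2 ⟨T, hT, h0⟩⟩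
end
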